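/- Let G ⊂ ℝⁿ (n ≥ 1) be a convex body in which a ball of some radius r > 0 rolls freely. Then there exists a constant C > 1 such that for all nonempty compact convex subsets K, L of G, (1/C)·d_H(K,L)^((n+1)/2) ≤ ρ_G(K,L) ≤ C·d_H(K,L). -/

import Mathlib

open MeasureTheory Metric Pointwise

/-- `ρ_G(K,L) := 2·Vol(G + K ∪̃ L) − Vol(G + K) − Vol(G + L)`. -/
noncomputable def rhoDist {n : ℕ} (G K L : Set (EuclideanSpace ℝ (Fin n))) : ℝ :=
  2 * (volume (G + closure (convexHull ℝ (K ∪ L)))).toReal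
    - (volume (G + K)).toReal - (volume (G + L)).toReal

local notation "⟪" x ", " y "⟫" => @inner ℝ _ _ x y

lemma cap_volume {n : ℕ} (hn : 1 ≤ n) (r m : ℝ) (hr : 0 < r) (hm : 0 < m) (hmr : m ≤ r)
    (u : EuclideanSpace ℝ (Fin n)) (hu : ‖u‖ = 1) :
    ENNReal.ofReal ((m / 2) * (Real.sqrt (r * m) / Real.sqrt n) ^ (n - 1)) ≤
      volume {w : EuclideanSpace ℝ (Fin n) | ‖w‖ ≤ r ∧ r - m < ⟪u, w⟫} := by
  haveI : NeZero n := ⟨by omega⟩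
  set e₀ : EuclideanSpace ℝ (Fin n) := EuclideanSpace.single (0 : Fin n) (1 : ℝ) with he₀
  have he₀n : ‖e₀‖ = 1 := by rw [he₀, EuclideanSpace.norm_single]; norm_num
  set R := Submodule.reflection (Submodule.span ℝ {u - e₀})ᗮ with hR
  have hRu : R u = e₀ := Submodule.reflection_sub (by rw [hu, he₀n])
  have hkey : ∀ w : EuclideanSpace ℝ (Fin n), ⟪u, w⟫ = (R w) 0 := by
    intro w
    have h1 : ⟪u, w⟫ = ⟪R u, R w⟫ := (R.inner_map_map u w).symm
    rw [h1, hRu, he₀, EuclideanSpace.inner_single_left]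
    simp
  set Svec : Set (EuclideanSpace ℝ (Fin n)) := {v | ‖v‖ ≤ r ∧ r - m < v 0} with hSvec
  have hSvec_meas : MeasurableSet Svec := by
    apply MeasurableSet.inter
    · exact isClosed_le continuous_norm continuous_const |>.measurableSet
    · exact isOpen_lt continuous_const (EuclideanSpace.proj (0 : Fin n)).continuous |>.measurableSet
  have hpre : {w : EuclideanSpace ℝ (Fin n) | ‖w‖ ≤ r ∧ r - m < ⟪u, w⟫} = R ⁻¹' Svec := by
    ext w
    simp only [Set.mem_setOf_eq, Set.mem_preimage, hSvec, R.norm_map, hkey w]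
  rw [hpre, R.measurePreserving.measure_preimage hSvec_meas.nullMeasurableSet]
  -- the box
  set s : ℝ := Real.sqrt (r * m) / (2 * Real.sqrt n) with hs
  have hn0 : (0:ℝ) < n := by exact_mod_cast hn
  have hsq : Real.sqrt n > 0 := Real.sqrt_pos.2 hn0
  have hrm : (0:ℝ) < r * m := mul_pos hr hm
  have hs0 : 0 < s := div_pos (Real.sqrt_pos.2 hrm) (by positivity)
  have hs2 : s ^ 2 = r * m / (4 * n) := by
    rw [hs, div_pow, Real.sq_sqrt hrm.le, mul_pow, Real.sq_sqrt hn0.le]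
    norm_num
  set I : Fin n → Set ℝ := fun i => if i = 0 then Set.Ioc (r - m) (r - m / 2) else Set.Ioc (-s) s
    with hI
  have hcard : (Finset.univ.filter (fun i : Fin n => ¬ i = 0)).card = n - 1 := by
    have : (Finset.univ.filter (fun i : Fin n => ¬ i = 0)) = Finset.univ.erase 0 := by
      ext i; simp [Finset.mem_erase, and_comm]
    rw [this, Finset.card_erase_of_mem (Finset.mem_univ _), Finset.card_univ, Fintype.card_fin]
  have hbox : (MeasurableEquiv.toLp 2 (Fin n → ℝ)).symm ⁻¹' (Set.univ.pi I) ⊆ Svec := by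
    intro v hv
    simp only [Set.mem_preimage, Set.mem_pi, Set.mem_univ, forall_true_left] at hv
    have hv0 : v 0 ∈ Set.Ioc (r - m) (r - m / 2) := by simpa [hI] using hv 0
    have hvi : ∀ i : Fin n, i ≠ 0 → v i ∈ Set.Ioc (-s) s := fun i hi => by
      simpa [hI, hi] using hv i
    constructor
    · rw [EuclideanSpace.norm_eq]
      have hsum : ∑ i : Fin n, ‖v i‖ ^ 2 ≤ (r - m/2)^2 + ((n : ℝ) - 1) * s^2 := by
        have hle : ∀ i : Fin n, ‖v i‖ ^ 2 ≤ if i = 0 then (r - m/2)^2 else s^2 := by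
          intro i
          split_ifs with hi
          · subst hi
            rw [Real.norm_eq_abs, sq_abs]
            have h1 : (0:ℝ) ≤ r - m := by linarith
            nlinarith [hv0.2, hv0.1]
          · rw [Real.norm_eq_abs, sq_abs]
            have := hvi i hi
            nlinarith [this.1, this.2]
        calc ∑ i : Fin n, ‖v i‖ ^ 2 ≤ ∑ i : Fin n, (if i = 0 then (r - m/2)^2 else s^2) :=
              Finset.sum_le_sum fun i _ => hle i
          _ = (r - m/2)^2 + ((n:ℝ) - 1) * s^2 := by
              rw [Finset.sum_ite, Finset.sum_const, Finset.sum_const, hcard]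
              have h1 : (Finset.univ.filter (fun i : Fin n => i = 0)).card = 1 := by
                simp [Finset.filter_eq']
              rw [h1]
              have : ((n - 1 : ℕ) : ℝ) = (n : ℝ) - 1 := by
                rw [Nat.cast_sub hn]; norm_num
              simp [nsmul_eq_mul, this]
      have hfin : (r - m/2)^2 + ((n : ℝ) - 1) * s^2 ≤ r ^ 2 := by
        rw [hs2]
        have h4 : ((n:ℝ) - 1) * (r * m / (4 * n)) ≤ r * m / 4 := by
          have h5 : (0:ℝ) < r * m / (4 * n) := by positivity
          calc ((n:ℝ) - 1) * (r * m / (4 * n)) ≤ (n:ℝ) * (r * m / (4 * n)) := by nlinarith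
            _ = r * m / 4 := by field_simp
        nlinarith
      calc Real.sqrt (∑ i : Fin n, ‖v i‖ ^ 2) ≤ Real.sqrt (r ^ 2) :=
            Real.sqrt_le_sqrt (le_trans hsum hfin)
        _ = r := Real.sqrt_sq hr.le
    · exact hv0.1
  calc ENNReal.ofReal ((m / 2) * (Real.sqrt (r * m) / Real.sqrt n) ^ (n - 1))
      = volume ((MeasurableEquiv.toLp 2 (Fin n → ℝ)).symm ⁻¹' (Set.univ.pi I)) := by
        have hImeas : ∀ i, MeasurableSet (I i) := by
          intro i; rw [hI]; dsimp only; split_ifs <;> exact measurableSet_Ioc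
        rw [(EuclideanSpace.volume_preserving_symm_measurableEquiv_toLp (Fin n)).measure_preimage
          (MeasurableSet.univ_pi hImeas).nullMeasurableSet]
        rw [volume_pi_pi]
        have hvol : ∀ i : Fin n, volume (I i) =
            ENNReal.ofReal (if i = 0 then m / 2 else 2 * s) := by
          intro i
          by_cases hi : i = 0 <;> simp [hI, hi, Real.volume_Ioc] <;> ring_nf <;> simp [ENNReal.ofReal_mul hs0.le]
        rw [Finset.prod_congr rfl fun i _ => hvol i]
        rw [← ENNReal.ofReal_prod_of_nonneg (fun i _ => by positivity)]
        congr 1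
        rw [Finset.prod_ite, Finset.prod_const, Finset.prod_const, hcard]
        have h1 : (Finset.univ.filter (fun i : Fin n => i = 0)).card = 1 := by
          simp [Finset.filter_eq']
        rw [h1, pow_one]
        have h2s : 2 * s = Real.sqrt (r * m) / Real.sqrt n := by
          rw [hs]; ring
        rw [h2s]
    _ ≤ volume Svec := measure_mono hbox

lemma cap_exists {n : ℕ} (hn : 1 ≤ n) (G : Set (EuclideanSpace ℝ (Fin n)))
    (hGcp : IsCompact G) (hGne : G.Nonempty)
    (r : ℝ) (hr : 0 < r)
    (hroll : ∀ p ∈ frontier G, ∃ x : EuclideanSpace ℝ (Fin n),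
      p ∈ closedBall x r ∧ closedBall x r ⊆ G)
    (K : Set (EuclideanSpace ℝ (Fin n))) (hKne : K.Nonempty) (hKcp : IsCompact K)
    (hKcv : Convex ℝ K) (p : EuclideanSpace ℝ (Fin n)) (d : ℝ) (hd : 0 < d) (hdr : d ≤ r)
    (hdinf : d ≤ infDist p K) :
    ∃ S : Set (EuclideanSpace ℝ (Fin n)), MeasurableSet S ∧ S ⊆ G + {p} ∧
      Disjoint S (G + K) ∧
      ENNReal.ofReal ((d / 2) * (Real.sqrt (r * d) / Real.sqrt n) ^ (n - 1)) ≤ volume S := by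
  classical
  -- nearest point
  obtain ⟨y, hyK, hy⟩ := hKcp.exists_infDist_eq_dist hKne p
  have hpy : 0 < ‖p - y‖ := by
    rw [← dist_eq_norm, ← hy]; exact lt_of_lt_of_le hd hdinf
  set u : EuclideanSpace ℝ (Fin n) := ‖p - y‖⁻¹ • (p - y) with hu_def
  have hu : ‖u‖ = 1 := by
    rw [hu_def, norm_smul, norm_inv, norm_norm, inv_mul_cancel₀ hpy.ne']
  -- obtuse angle criterion
  have hproj : ∀ k ∈ K, ⟪p - y, k - y⟫ ≤ 0 := by
    refine (norm_eq_iInf_iff_real_inner_le_zero hKcv hyK).mp ?_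
    have : infDist p K = ⨅ w : K, dist p w := infDist_eq_iInf
    rw [hy] at this
    rw [← dist_eq_norm, this]
    exact iInf_congr fun w => dist_eq_norm p w
  set β := ⟪u, y⟫ with hβ
  have hKle : ∀ k ∈ K, ⟪u, k⟫ ≤ β := by
    intro k hk
    have h1 : ⟪u, k⟫ - β = ⟪u, k - y⟫ := by rw [hβ, inner_sub_right]
    have h2 : ⟪u, k - y⟫ = ‖p - y‖⁻¹ * ⟪p - y, k - y⟫ := by
      rw [hu_def, real_inner_smul_left]
    have h3 : ‖p - y‖⁻¹ * ⟪p - y, k - y⟫ ≤ 0 :=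
      mul_nonpos_of_nonneg_of_nonpos (inv_nonneg.2 (norm_nonneg _)) (hproj k hk)
    linarith
  have hup : ⟪u, p⟫ = β + ‖p - y‖ := by
    have h1 : ⟪u, p⟫ - β = ⟪u, p - y⟫ := by rw [hβ, inner_sub_right]
    have h2 : ⟪u, p - y⟫ = ‖p - y‖⁻¹ * ⟪p - y, p - y⟫ := by
      rw [hu_def, real_inner_smul_left]
    rw [real_inner_self_eq_norm_sq] at h2
    have h3 : ⟪u, p - y⟫ = ‖p - y‖ := by
      rw [h2, pow_two, ← mul_assoc, inv_mul_cancel₀ hpy.ne', one_mul]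
    linarith
  have hd' : d ≤ ‖p - y‖ := by rw [← dist_eq_norm, ← hy]; exact hdinf
  -- maximize inner product over G
  have hcont : Continuous fun g : EuclideanSpace ℝ (Fin n) => ⟪u, g⟫ :=
    continuous_const.inner continuous_id
  obtain ⟨g₀, hg₀G, hg₀'⟩ := hGcp.exists_isMaxOn hGne hcont.continuousOn
  have hg₀ : ∀ g ∈ G, ⟪u, g⟫ ≤ ⟪u, g₀⟫ := fun g hg => hg₀' hg
  set h := ⟪u, g₀⟫ with hh
  -- g₀ is on the frontier
  have hg₀f : g₀ ∈ frontier G := by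
    rw [hGcp.isClosed.frontier_eq]
    refine ⟨hg₀G, fun hint => ?_⟩
    obtain ⟨ε, hε, hball⟩ := Metric.mem_nhds_iff.mp (mem_interior_iff_mem_nhds.mp hint)
    have hz : g₀ + (ε/2) • u ∈ G := by
      apply hball
      rw [mem_ball, dist_eq_norm, add_sub_cancel_left, norm_smul, hu]
      simp [abs_of_pos hε]
      linarith
    have := hg₀ _ hz
    rw [inner_add_right, real_inner_smul_right, real_inner_self_eq_norm_sq, hu, ← hh] at this
    norm_num at this
    linarith
  obtain ⟨x, hg₀x, hxG⟩ := hroll g₀ hg₀f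
  have hx_le : ⟪u, x⟫ + r ≤ h := by
    have hmem : x + r • u ∈ G := by
      apply hxG
      rw [mem_closedBall, dist_eq_norm, add_sub_cancel_left, norm_smul, hu]
      simp [abs_of_pos hr]
    have := hg₀ _ hmem
    rw [inner_add_right, real_inner_smul_right, real_inner_self_eq_norm_sq, hu] at this
    simpa using this
  have hx_ge : h - r ≤ ⟪u, x⟫ := by
    have h1 : ⟪u, g₀ - x⟫ ≤ ‖g₀ - x‖ := by
      calc ⟪u, g₀ - x⟫ ≤ ‖u‖ * ‖g₀ - x‖ := real_inner_le_norm u _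
        _ = ‖g₀ - x‖ := by rw [hu, one_mul]
    have h2 : ‖g₀ - x‖ ≤ r := by rw [← dist_eq_norm]; exact mem_closedBall.mp hg₀x
    have h3 : h = ⟪u, x⟫ + ⟪u, g₀ - x⟫ := by rw [hh, ← inner_add_right]; congr 1; abel
    linarith
  -- the cap
  set cap : Set (EuclideanSpace ℝ (Fin n)) := {w | ‖w‖ ≤ r ∧ r - d < ⟪u, w⟫} with hcap
  refine ⟨(x + p) +ᵥ cap, ?_, ?_, ?_, ?_⟩
  · apply MeasurableSet.const_vadd
    apply MeasurableSet.inter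
    · exact isClosed_le continuous_norm continuous_const |>.measurableSet
    · exact isOpen_lt continuous_const hcont |>.measurableSet
  · rintro _ ⟨w, hw, rfl⟩
    have : x + w ∈ G := hxG (by rw [mem_closedBall, dist_eq_norm]; simpa using hw.1)
    exact ⟨x + w, this, p, rfl, by simp only [vadd_eq_add]; abel⟩
  · rw [Set.disjoint_left]
    rintro _ ⟨w, hw, rfl⟩ ⟨g, hg, k, hk, heq⟩
    have h1 : ⟪u, x + p + w⟫ > h + β := by
      rw [inner_add_right, inner_add_right, hup]
      have := hw.2
      have hxge := hx_ge
      linarith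
    have h2 : ⟪u, g + k⟫ ≤ h + β := by
      rw [inner_add_right]
      exact add_le_add (hg₀ g hg) (hKle k hk)
    have heq' : g + k = x + p + w := by simpa [vadd_eq_add] using heq
    rw [heq'] at h2
    linarith
  · rw [measure_vadd]
    exact cap_volume hn r d hr hd hdr u hu

lemma lower_one {n : ℕ} (hn : 1 ≤ n) (G : Set (EuclideanSpace ℝ (Fin n)))
    (hGcp : IsCompact G) (hGne : G.Nonempty)
    (r : ℝ) (hr : 0 < r)
    (hroll : ∀ p ∈ frontier G, ∃ x : EuclideanSpace ℝ (Fin n),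
      p ∈ closedBall x r ∧ closedBall x r ⊆ G)
    (K L : Set (EuclideanSpace ℝ (Fin n))) (hKne : K.Nonempty) (hKcp : IsCompact K)
    (hKcv : Convex ℝ K) (p : EuclideanSpace ℝ (Fin n)) (hpL : p ∈ L)
    (d : ℝ) (hd : 0 < d) (hdr : d ≤ r) (hdinf : d ≤ infDist p K) :
    ENNReal.ofReal ((d / 2) * (Real.sqrt (r * d) / Real.sqrt n) ^ (n - 1)) + volume (G + K) ≤
      volume (G + closure (convexHull ℝ (K ∪ L))) := by
  obtain ⟨S, hSmeas, hSsub, hSdisj, hSvol⟩ :=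
    cap_exists hn G hGcp hGne r hr hroll K hKne hKcp hKcv p d hd hdr hdinf
  have hGKmeas : MeasurableSet (G + K) := (hGcp.add hKcp).isClosed.measurableSet
  have hsub : S ∪ (G + K) ⊆ G + closure (convexHull ℝ (K ∪ L)) := by
    apply Set.union_subset
    · refine hSsub.trans (Set.add_subset_add_left ?_)
      exact Set.singleton_subset_iff.2 (subset_closure (subset_convexHull ℝ _ (Or.inr hpL)))
    · refine Set.add_subset_add_left ?_
      exact fun k hk => subset_closure (subset_convexHull ℝ _ (Or.inl hk))
  calc ENNReal.ofReal ((d / 2) * (Real.sqrt (r * d) / Real.sqrt n) ^ (n - 1)) + volume (G + K)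
      ≤ volume S + volume (G + K) := add_le_add_left hSvol _
    _ = volume (S ∪ (G + K)) := (measure_union hSdisj hGKmeas).symm
    _ ≤ volume (G + closure (convexHull ℝ (K ∪ L))) := measure_mono hsub

lemma upper_one {n : ℕ} (G : Set (EuclideanSpace ℝ (Fin n)))
    (hGcv : Convex ℝ G) (hGcp : IsCompact G)
    (K L : Set (EuclideanSpace ℝ (Fin n)))
    (hKne : K.Nonempty) (hKcp : IsCompact K) (hKcv : Convex ℝ K)
    (hLne : L.Nonempty) (hLcp : IsCompact L)
    (x₀ : EuclideanSpace ℝ (Fin n)) (ε : ℝ) (hε : 0 < ε) (hball : closedBall x₀ ε ⊆ G) :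
    volume (G + closure (convexHull ℝ (K ∪ L))) ≤
      ENNReal.ofReal ((1 + hausdorffDist K L / ε) ^ n) * volume (G + K) := by
  classical
  set d := hausdorffDist K L with hd_def
  have hd0 : 0 ≤ d := hausdorffDist_nonneg
  have hedist : EMetric.hausdorffEdist L K ≠ ⊤ :=
    hausdorffEdist_ne_top_of_nonempty_of_bounded hLne hKne hLcp.isBounded hKcp.isBounded
  obtain ⟨k₀, hk₀⟩ := id hKne
  set t := d / ε with ht_def
  have ht0 : 0 ≤ t := div_nonneg hd0 hε.le
  set A := G + K with hA_def
  have hAcv : Convex ℝ A := hGcv.add hKcv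
  set v : EuclideanSpace ℝ (Fin n) := t • (-x₀ - k₀) with hv_def
  -- step 1 : hull inside K + ball
  have h1 : closure (convexHull ℝ (K ∪ L)) ⊆ K + closedBall 0 d := by
    have hconv : Convex ℝ (K + closedBall 0 d) := hKcv.add (convex_closedBall 0 d)
    have hclosed : IsClosed (K + closedBall 0 d) :=
      (hKcp.add (isCompact_closedBall 0 d)).isClosed
    refine closure_minimal (convexHull_min (Set.union_subset ?_ ?_) hconv) hclosed
    · intro k hk
      exact ⟨k, hk, 0, by simp [mem_closedBall, hd0], by simp⟩
    · intro z hz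
      have hzK : infDist z K ≤ d := by
        have := infDist_le_hausdorffDist_of_mem hz hedist
        rwa [hausdorffDist_comm] at this
      obtain ⟨k, hkK, hk⟩ := hKcp.exists_infDist_eq_dist hKne z
      refine ⟨k, hkK, z - k, ?_, by module⟩
      rw [mem_closedBall_zero_iff, ← dist_eq_norm']
      rw [hk] at hzK
      rwa [dist_comm]
  -- step 2 : ball inside scaled copy of A
  have h2 : closedBall (0 : EuclideanSpace ℝ (Fin n)) d ⊆ t • A + {v} := by
    intro w hw
    rw [mem_closedBall_zero_iff] at hw
    rcases eq_or_lt_of_le hd0 with hd | hd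
    · have hw0 : w = 0 := by
        rw [← norm_le_zero_iff]; rw [← hd] at hw; exact hw
      have ht0' : t = 0 := by rw [ht_def, ← hd]; simp
      refine ⟨t • (x₀ + k₀), Set.smul_mem_smul_set ⟨x₀, hball (mem_closedBall_self hε.le),
        k₀, hk₀, rfl⟩, v, rfl, ?_⟩
      rw [hw0, hv_def, ht0']
      simp
    · have htpos : 0 < t := div_pos hd hε
      set a : EuclideanSpace ℝ (Fin n) := (ε / d) • w + x₀ + k₀ with ha_def
      have haA : a ∈ A := by
        refine ⟨(ε / d) • w + x₀, hball ?_, k₀, hk₀, by abel⟩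
        rw [mem_closedBall, dist_eq_norm, add_sub_cancel_right, norm_smul,
          Real.norm_eq_abs, abs_of_pos (div_pos hε hd)]
        calc ε / d * ‖w‖ ≤ ε / d * d := by
              apply mul_le_mul_of_nonneg_left hw (div_pos hε hd).le
          _ = ε := by field_simp
      refine ⟨t • a, Set.smul_mem_smul_set haA, v, rfl, ?_⟩
      rw [ha_def, hv_def]
      rw [smul_add, smul_add, smul_smul]
      have : t * (ε / d) = 1 := by rw [ht_def]; field_simp
      rw [this, one_smul, smul_sub]
      module
  -- step 3 : assemble
  have h3 : G + closure (convexHull ℝ (K ∪ L)) ⊆ (1 + t) • A + {v} := by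
    refine ((Set.add_subset_add_left h1).trans
      (Set.add_subset_add_left (Set.add_subset_add_left h2))).trans ?_
    rw [hAcv.add_smul zero_le_one ht0, one_smul, hA_def]
    rw [← add_assoc, ← add_assoc]
  calc volume (G + closure (convexHull ℝ (K ∪ L))) ≤ volume ((1 + t) • A + {v}) :=
        measure_mono h3
    _ = volume (v +ᵥ ((1 + t) • A)) := by
        congr 1
        rw [add_comm, Set.singleton_add]
        rfl
    _ = volume ((1 + t) • A) := measure_vadd _ _ _
    _ = ENNReal.ofReal ((1 + t) ^ n) * volume A := by
        rw [MeasureTheory.Measure.addHaar_smul]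
        congr 2
        rw [finrank_euclideanSpace_fin, abs_of_nonneg (by positivity)]

lemma pow_aux (t : ℝ) (ht : 0 ≤ t) (k : ℕ) : (1 + t) ^ k ≤ 1 + k * t * (1 + t) ^ k := by
  induction k with
  | zero => simp
  | succ k ih =>
    have h1 : (0:ℝ) ≤ (1 + t) ^ k := by positivity
    have h2 : (1 + t) ^ (k + 1) = (1 + t) ^ k + t * (1 + t) ^ k := by ring
    have h3 : (1 + t) ^ k ≤ (1 + t) ^ (k + 1) :=
      pow_le_pow_right₀ (by linarith) (Nat.le_succ k)
    have h4 : 0 ≤ ((k:ℝ) + 1) * t := by positivity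
    have h5 := mul_le_mul_of_nonneg_left h3 h4
    push_cast
    nlinarith


theorem stmt1 {n : ℕ} (hn : 1 ≤ n) (G : Set (EuclideanSpace ℝ (Fin n)))
    (hGcv : Convex ℝ G) (hGcp : IsCompact G) (hGint : (interior G).Nonempty)
    (r : ℝ) (hr : 0 < r)
    (hroll : ∀ p ∈ frontier G, ∃ x : EuclideanSpace ℝ (Fin n),
      p ∈ closedBall x r ∧ closedBall x r ⊆ G) :
    ∃ C : ℝ, 1 < C ∧ ∀ K L : Set (EuclideanSpace ℝ (Fin n)),
      K.Nonempty → IsCompact K → Convex ℝ K → K ⊆ G →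
      L.Nonempty → IsCompact L → Convex ℝ L → L ⊆ G →
      (1 / C) * hausdorffDist K L ^ (((n : ℝ) + 1) / 2) ≤ rhoDist G K L ∧
        rhoDist G K L ≤ C * hausdorffDist K L := by
  classical
  obtain ⟨z₀, hz₀⟩ := hGint
  obtain ⟨ε₀, hε₀, hball₀⟩ := Metric.isOpen_iff.mp isOpen_interior z₀ hz₀
  set ε := ε₀ / 2 with hε_def
  have hε : 0 < ε := by positivity
  have hball : closedBall z₀ ε ⊆ G := by
    intro w hw
    rw [mem_closedBall] at hw
    exact interior_subset (hball₀ (by rw [mem_ball]; linarith))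
  have hGne : G.Nonempty := ⟨z₀, interior_subset hz₀⟩
  set D := diam G + r with hD_def
  have hDpos : 0 < D := add_pos_of_nonneg_of_pos diam_nonneg hr
  have hrD : r ≤ D := le_add_of_nonneg_left diam_nonneg
  have hV₁fin : volume (G + G) ≠ ⊤ := (hGcp.add hGcp).measure_lt_top.ne
  set V₁ := (volume (G + G)).toReal with hV₁_def
  have hV₁0 : 0 ≤ V₁ := ENNReal.toReal_nonneg
  set cup := n * (1 + D / ε) ^ n * V₁ / ε + 1 with hcup_def
  have hcup0 : 0 < cup := by positivity
  have hsqrtn : 0 < Real.sqrt n := Real.sqrt_pos.2 (by exact_mod_cast hn)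
  have hsqrtr : 0 < Real.sqrt r := Real.sqrt_pos.2 hr
  set eR : ℝ := ((n : ℝ) + 1) / 2 with heR_def
  have heR0 : 0 < eR := by positivity
  set clow := (1/2) * (Real.sqrt r / Real.sqrt n) ^ (n - 1) * ((r / D) ^ eR) with hclow_def
  have hclow : 0 < clow := by
    apply mul_pos (mul_pos one_half_pos (pow_pos (div_pos hsqrtr hsqrtn) _))
    exact Real.rpow_pos_of_pos (div_pos hr hDpos) _
  set C := max (2 * cup + 2) (1 / clow + 2) with hC_def
  have hC1 : 1 < C := lt_of_lt_of_le (by linarith) (le_max_left _ _)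
  have hC0 : 0 < C := lt_trans one_pos hC1
  have h1C : 1 / C ≤ clow := by
    rw [div_le_iff₀ hC0]
    have h2 : 1 / clow + 2 ≤ C := le_max_right _ _
    have h3 : clow * (1 / clow + 2) ≤ clow * C := mul_le_mul_of_nonneg_left h2 hclow.le
    have h4 : clow * (1 / clow + 2) = 1 + 2 * clow := by field_simp
    nlinarith
  refine ⟨C, hC1, fun K L hKne hKcp hKcv hKG hLne hLcp hLcv hLG => ?_⟩
  set d := hausdorffDist K L with hd_def
  have hd0 : 0 ≤ d := hausdorffDist_nonneg
  have hdD : d ≤ D := by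
    have h1 : d ≤ diam (K ∪ L) :=
      hausdorffDist_le_diam hKne hKcp.isBounded hLne hLcp.isBounded
    have h2 : diam (K ∪ L) ≤ diam G := diam_mono (Set.union_subset hKG hLG) hGcp.isBounded
    rw [hD_def]; linarith
  have hconvcp : IsCompact (closure (convexHull ℝ (K ∪ L))) :=
    Metric.isCompact_of_isClosed_isBounded isClosed_closure
      ((isBounded_convexHull.2 (hKcp.union hLcp).isBounded).closure)
  have hVcfin : volume (G + closure (convexHull ℝ (K ∪ L))) ≠ ⊤ :=
    (hGcp.add hconvcp).measure_lt_top.ne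
  have hVkfin : volume (G + K) ≠ ⊤ := (hGcp.add hKcp).measure_lt_top.ne
  have hVlfin : volume (G + L) ≠ ⊤ := (hGcp.add hLcp).measure_lt_top.ne
  have hKsub : G + K ⊆ G + closure (convexHull ℝ (K ∪ L)) :=
    Set.add_subset_add_left fun k hk => subset_closure (subset_convexHull ℝ _ (Or.inl hk))
  have hLsub : G + L ⊆ G + closure (convexHull ℝ (K ∪ L)) :=
    Set.add_subset_add_left fun k hk => subset_closure (subset_convexHull ℝ _ (Or.inr hk))
  have hVk_le : (volume (G + K)).toReal ≤
      (volume (G + closure (convexHull ℝ (K ∪ L)))).toReal :=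
    ENNReal.toReal_mono hVcfin (measure_mono hKsub)
  have hVl_le : (volume (G + L)).toReal ≤
      (volume (G + closure (convexHull ℝ (K ∪ L)))).toReal :=
    ENNReal.toReal_mono hVcfin (measure_mono hLsub)
  have hVkV₁ : (volume (G + K)).toReal ≤ V₁ :=
    ENNReal.toReal_mono hV₁fin (measure_mono (Set.add_subset_add_left hKG))
  have hVlV₁ : (volume (G + L)).toReal ≤ V₁ :=
    ENNReal.toReal_mono hV₁fin (measure_mono (Set.add_subset_add_left hLG))
  -- upper bounds on the hull volume
  have hupK : (volume (G + closure (convexHull ℝ (K ∪ L)))).toReal ≤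
      (1 + d / ε) ^ n * (volume (G + K)).toReal := by
    have h := upper_one G hGcv hGcp K L hKne hKcp hKcv hLne hLcp z₀ ε hε hball
    calc (volume (G + closure (convexHull ℝ (K ∪ L)))).toReal
        ≤ (ENNReal.ofReal ((1 + d / ε) ^ n) * volume (G + K)).toReal :=
          ENNReal.toReal_mono (ENNReal.mul_ne_top ENNReal.ofReal_ne_top hVkfin) h
      _ = (1 + d / ε) ^ n * (volume (G + K)).toReal := by
          rw [ENNReal.toReal_mul, ENNReal.toReal_ofReal (by positivity)]
  have hupL : (volume (G + closure (convexHull ℝ (K ∪ L)))).toReal ≤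
      (1 + d / ε) ^ n * (volume (G + L)).toReal := by
    have h := upper_one G hGcv hGcp L K hLne hLcp hLcv hKne hKcp z₀ ε hε hball
    rw [Set.union_comm L K, hausdorffDist_comm] at h
    calc (volume (G + closure (convexHull ℝ (K ∪ L)))).toReal
        ≤ (ENNReal.ofReal ((1 + d / ε) ^ n) * volume (G + L)).toReal :=
          ENNReal.toReal_mono (ENNReal.mul_ne_top ENNReal.ofReal_ne_top hVlfin) h
      _ = (1 + d / ε) ^ n * (volume (G + L)).toReal := by
          rw [ENNReal.toReal_mul, ENNReal.toReal_ofReal (by positivity)]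
  have hterm : ∀ V : ℝ, 0 ≤ V → V ≤ V₁ →
      (volume (G + closure (convexHull ℝ (K ∪ L)))).toReal ≤ (1 + d / ε) ^ n * V →
      (volume (G + closure (convexHull ℝ (K ∪ L)))).toReal - V ≤ cup * d := by
    intro V hV0 hVV₁ hup
    have ht0 : 0 ≤ d / ε := div_nonneg hd0 hε.le
    have htT : d / ε ≤ D / ε := by gcongr
    have hpow : (1 + d / ε) ^ n ≤ 1 + n * (d / ε) * (1 + d / ε) ^ n := pow_aux _ ht0 n
    have hmono : (1 + d / ε) ^ n ≤ (1 + D / ε) ^ n := pow_le_pow_left₀ (by positivity) (by linarith) n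
    calc (volume (G + closure (convexHull ℝ (K ∪ L)))).toReal - V
        ≤ (1 + d / ε) ^ n * V - V := by linarith
      _ = ((1 + d / ε) ^ n - 1) * V := by ring
      _ ≤ (n * (d / ε) * (1 + d / ε) ^ n) * V :=
          mul_le_mul_of_nonneg_right (by linarith) hV0
      _ ≤ (n * (d / ε) * (1 + D / ε) ^ n) * V₁ := by
          apply mul_le_mul _ hVV₁ hV0 (by positivity)
          exact mul_le_mul_of_nonneg_left hmono (by positivity)
      _ = (n * (1 + D / ε) ^ n * V₁ / ε) * d := by field_simp
      _ ≤ cup * d := by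
          apply mul_le_mul_of_nonneg_right _ hd0
          rw [hcup_def]; linarith
  have hupper : rhoDist G K L ≤ C * d := by
    have e1 := hterm _ ENNReal.toReal_nonneg hVkV₁ hupK
    have e2 := hterm _ ENNReal.toReal_nonneg hVlV₁ hupL
    have hCd : (2 * cup) * d ≤ C * d := by
      apply mul_le_mul_of_nonneg_right _ hd0
      calc 2 * cup ≤ 2 * cup + 2 := by linarith
        _ ≤ C := le_max_left _ _
    simp only [rhoDist]
    linarith
  have hlower : (1 / C) * d ^ eR ≤ rhoDist G K L := by
    rcases eq_or_lt_of_le hd0 with hdz | hdpos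
    · rw [← hdz, Real.zero_rpow heR0.ne', mul_zero]
      simp only [rhoDist]
      linarith
    · obtain ⟨p₁, hp₁K, hp₁max⟩ :=
        hKcp.exists_isMaxOn hKne (continuous_infDist_pt L).continuousOn
      obtain ⟨p₂, hp₂L, hp₂max⟩ :=
        hLcp.exists_isMaxOn hLne (continuous_infDist_pt K).continuousOn
      have hdmax : d ≤ max (infDist p₁ L) (infDist p₂ K) := by
        rw [hd_def]
        apply hausdorffDist_le_of_infDist (le_max_iff.2 (Or.inl infDist_nonneg))
        · intro x hx; exact le_trans (hp₁max hx) (le_max_left _ _)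
        · intro x hx; exact le_trans (hp₂max hx) (le_max_right _ _)
      set m := min d r with hm_def
      have hm0 : 0 < m := lt_min hdpos hr
      have hmr : m ≤ r := min_le_right _ _
      have hmd : m ≤ d := min_le_left _ _
      have hmlow : (r / D) * d ≤ m := by
        rcases le_total d r with h | h
        · rw [hm_def, min_eq_left h]
          calc (r / D) * d ≤ 1 * d :=
                mul_le_mul_of_nonneg_right ((div_le_one hDpos).2 hrD) hd0
            _ = d := one_mul d
        · rw [hm_def, min_eq_right h]
          calc (r / D) * d ≤ (r / D) * D :=
                mul_le_mul_of_nonneg_left hdD (by positivity)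
            _ = r := by field_simp
      have hcap0 : 0 ≤ (m / 2) * (Real.sqrt (r * m) / Real.sqrt n) ^ (n - 1) := by positivity
      have hrho : (m / 2) * (Real.sqrt (r * m) / Real.sqrt n) ^ (n - 1) ≤ rhoDist G K L := by
        rcases le_max_iff.mp hdmax with h | h
        · -- p₁ ∈ K is far from L
          have key := lower_one hn G hGcp hGne r hr hroll L K hLne hLcp hLcv p₁ hp₁K
            m hm0 hmr (le_trans hmd h)
          rw [Set.union_comm L K] at key
          have h' := ENNReal.toReal_mono hVcfin key
          rw [ENNReal.toReal_add ENNReal.ofReal_ne_top hVlfin,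
            ENNReal.toReal_ofReal hcap0] at h'
          simp only [rhoDist]
          linarith
        · -- p₂ ∈ L is far from K
          have key := lower_one hn G hGcp hGne r hr hroll K L hKne hKcp hKcv p₂ hp₂L
            m hm0 hmr (le_trans hmd h)
          have h' := ENNReal.toReal_mono hVcfin key
          rw [ENNReal.toReal_add ENNReal.ofReal_ne_top hVkfin,
            ENNReal.toReal_ofReal hcap0] at h'
          simp only [rhoDist]
          linarith
      have hcm : clow * d ^ eR ≤ (m / 2) * (Real.sqrt (r * m) / Real.sqrt n) ^ (n - 1) := by
        have hsplit : (m / 2) * (Real.sqrt (r * m) / Real.sqrt n) ^ (n - 1) =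
            (1/2) * (Real.sqrt r / Real.sqrt n) ^ (n - 1) * (m * Real.sqrt m ^ (n - 1)) := by
          rw [Real.sqrt_mul hr.le, mul_div_right_comm, mul_pow]
          ring
        have hmsq : m * Real.sqrt m ^ (n - 1) = m ^ eR := by
          rw [Real.sqrt_eq_rpow, ← Real.rpow_natCast (m ^ ((1:ℝ)/2)) (n - 1),
            ← Real.rpow_mul hm0.le]
          nth_rewrite 1 [← Real.rpow_one m]
          rw [← Real.rpow_add hm0]
          congr 1
          have : ((n - 1 : ℕ) : ℝ) = (n : ℝ) - 1 := by
            rw [Nat.cast_sub hn]; norm_num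
          rw [this, heR_def]; ring
        have hmono : ((r / D) * d) ^ eR ≤ m ^ eR :=
          Real.rpow_le_rpow (by positivity) hmlow heR0.le
        have hmul : ((r / D) * d) ^ eR = (r / D) ^ eR * d ^ eR :=
          Real.mul_rpow (by positivity) hd0
        rw [hsplit, hmsq, hclow_def]
        calc (1/2) * (Real.sqrt r / Real.sqrt n) ^ (n - 1) * ((r / D) ^ eR) * d ^ eR
            = (1/2) * (Real.sqrt r / Real.sqrt n) ^ (n - 1) * ((r / D) ^ eR * d ^ eR) := by
              ring
          _ ≤ (1/2) * (Real.sqrt r / Real.sqrt n) ^ (n - 1) * m ^ eR := by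
              apply mul_le_mul_of_nonneg_left _ (by positivity)
              rw [← hmul]; exact hmono
      calc (1 / C) * d ^ eR ≤ clow * d ^ eR :=
            mul_le_mul_of_nonneg_right h1C (Real.rpow_nonneg hd0 _)
        _ ≤ (m / 2) * (Real.sqrt (r * m) / Real.sqrt n) ^ (n - 1) := hcm
        _ ≤ rhoDist G K L := hrho
  exact ⟨hlower, hupper⟩
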